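/- Let $p_1,\dots,p_N$ be positive reals and $n_1,\dots,n_N$ be reals, and define $q_{x,y} = 2^{n_y}/2^{n_x}$ and $k(x,y) = \frac{2}{q_{x,y} p_x + q_{y,x} p_y}$. Then the $N \times N$ matrix $(k(x,y))_{x,y}$ is positive semidefinite. -/

import Mathlib

open MeasureTheory Real Set

lemma integral_exp_neg_mul' {a : ℝ} (ha : 0 < a) :
    ∫ t in Ioi (0:ℝ), Real.exp (-(a * t)) = 1 / a := by
  have := integral_comp_mul_right_Ioi (fun x => Real.exp (-x)) 0 ha
  simp only [zero_mul] at this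
  simp only [mul_comm a, this, integral_exp_neg_Ioi_zero, smul_eq_mul, mul_one, one_div]

lemma cauchy_sum_nonneg {N : ℕ} (b c : Fin N → ℝ) (hb : ∀ i, 0 < b i) :
    0 ≤ ∑ i, ∑ j, c i * c j * (1 / (b i + b j)) := by
  have hI : ∀ i j : Fin N, IntegrableOn
      (fun t => c i * c j * Real.exp (-((b i + b j) * t))) (Ioi (0:ℝ)) := by
    intro i j
    apply Integrable.const_mul
    simpa only [neg_mul, IntegrableOn] using exp_neg_integrableOn_Ioi 0 (show 0 < b i + b j by
      have := hb i; have := hb j; linarith)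
  have hsq : ∀ t : ℝ, (∑ i, c i * Real.exp (-(b i * t)))^2
      = ∑ i, ∑ j, c i * c j * Real.exp (-((b i + b j) * t)) := by
    intro t
    rw [sq, Finset.sum_mul_sum]
    refine Finset.sum_congr rfl fun i _ => Finset.sum_congr rfl fun j _ => ?_
    rw [show -((b i + b j) * t) = -(b i * t) + -(b j * t) by ring, Real.exp_add]
    ring
  have key : ∑ i, ∑ j, c i * c j * (1 / (b i + b j))
      = ∫ t in Ioi (0:ℝ), (∑ i, c i * Real.exp (-(b i * t)))^2 := by
    simp_rw [hsq]
    rw [integral_finset_sum _ fun i _ => integrable_finset_sum _ fun j _ => hI i j]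
    refine Finset.sum_congr rfl fun i _ => ?_
    rw [integral_finset_sum _ fun j _ => hI i j]
    refine Finset.sum_congr rfl fun j _ => ?_
    rw [MeasureTheory.integral_const_mul, integral_exp_neg_mul' (by
      have := hb i; have := hb j; linarith)]
  rw [key]
  exact integral_nonneg fun t => sq_nonneg _

theorem stmt6 (N : ℕ) (p : Fin N → ℝ) (hp : ∀ x, 0 < p x) (nv : Fin N → ℝ) :
    (Matrix.of fun x y : Fin N =>
      2 / ((2 : ℝ) ^ (nv y) / (2 : ℝ) ^ (nv x) * p x
            + (2 : ℝ) ^ (nv x) / (2 : ℝ) ^ (nv y) * p y)).PosSemidef := by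
  set a : Fin N → ℝ := fun i => (2:ℝ) ^ (nv i) with ha_def
  have ha : ∀ i, 0 < a i := fun i => Real.rpow_pos_of_pos two_pos _
  have hb : ∀ i, 0 < p i / (a i)^2 := fun i => div_pos (hp i) (by positivity)
  rw [Matrix.posSemidef_iff_dotProduct_mulVec]
  constructor
  · ext i j
    simp only [Matrix.conjTranspose_apply, Matrix.of_apply, star_trivial]
    rw [add_comm]
  · intro x
    have hd : ∀ i, 0 < a i + a i := fun i => by have := ha i; linarith
    have key : dotProduct (star x) ((Matrix.of fun x y : Fin N =>
        2 / ((2 : ℝ) ^ (nv y) / (2 : ℝ) ^ (nv x) * p x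
            + (2 : ℝ) ^ (nv x) / (2 : ℝ) ^ (nv y) * p y)).mulVec x)
        = 2 * ∑ i, ∑ j, (x i / a i) * (x j / a j) *
            (1 / (p i / (a i)^2 + p j / (a j)^2)) := by
      simp only [dotProduct, Matrix.mulVec, Matrix.of_apply, star_trivial,
        dotProduct, Finset.mul_sum]
      refine Finset.sum_congr rfl fun i _ => Finset.sum_congr rfl fun j _ => ?_
      have hai := (ha i).ne'
      have haj := (ha j).ne'
      have hS : (0:ℝ) < p i / (a i)^2 + p j / (a j)^2 := by
        have := hb i; have := hb j; linarith
      have h1 : a j / a i * p i + a i / a j * p j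
          = (a i * a j) * (p i / (a i)^2 + p j / (a j)^2) := by
        field_simp
      rw [h1]
      field_simp
    rw [key]
    have := cauchy_sum_nonneg (fun i => p i / (a i)^2) (fun i => x i / a i) hb
    positivity
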